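/- arXiv:1303.4113 — 5 statements merged into one kernel-verified Lean document; each statement's English description precedes it below -/
import Mathlib

section
/- There do not exist vectors x, y ∈ ℤ⁴ with x * x = 1, x * y = 2, y * y = 19, where * denotes the Euclidean inner product. Equivalently, the binary quadratic form x² + 4xy + 19y² is not a sum of four squares of integral linear forms. -/
set_option maxHeartbeats 1000000

/-- Three squares can never sum to 15 (since 15 ≡ 7 mod 8). -/
theorem three_sq_ne_15 (a b c : ℤ) : a * a + b * b + c * c ≠ 15 := by
  intro h
  have h8 : ((a : ZMod 8) * a + b * b + c * c) = 15 := by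
    have := congrArg (fun n : ℤ => (n : ZMod 8)) h
    push_cast at this
    exact_mod_cast this
  revert h8
  generalize (a : ZMod 8) = u
  generalize (b : ZMod 8) = v
  generalize (c : ZMod 8) = w
  revert u v w
  decide

theorem nineteen_aux (a b c d : ℤ) (h : a * a + b * b + c * c + d * d = 19)
    (ha : a = 2 ∨ a = -2) : False := by
  rcases ha with ha | ha <;> subst ha <;> exact three_sq_ne_15 b c d (by linarith)

/-- There are no x, y ∈ ℤ⁴ with x*x = 1, x*y = 2, y*y = 19. -/
theorem no_Z4_rep_1_2_19 :
    ¬ ∃ x y : Fin 4 → ℤ,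
      (∑ i, x i * x i) = 1 ∧ (∑ i, x i * y i) = 2 ∧ (∑ i, y i * y i) = 19 := by
  rintro ⟨x, y, hx, hxy, hy⟩
  simp only [Fin.sum_univ_four] at hx hxy hy
  have n0 := mul_self_nonneg (x 0)
  have n1 := mul_self_nonneg (x 1)
  have n2 := mul_self_nonneg (x 2)
  have n3 := mul_self_nonneg (x 3)
  have b0 : -1 ≤ x 0 ∧ x 0 ≤ 1 := ⟨by nlinarith, by nlinarith⟩
  have b1 : -1 ≤ x 1 ∧ x 1 ≤ 1 := ⟨by nlinarith, by nlinarith⟩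
  have b2 : -1 ≤ x 2 ∧ x 2 ≤ 1 := ⟨by nlinarith, by nlinarith⟩
  have b3 : -1 ≤ x 3 ∧ x 3 ≤ 1 := ⟨by nlinarith, by nlinarith⟩
  obtain ⟨b0l, b0r⟩ := b0
  obtain ⟨b1l, b1r⟩ := b1
  obtain ⟨b2l, b2r⟩ := b2
  obtain ⟨b3l, b3r⟩ := b3
  set a := x 0 with ha
  set b := x 1 with hb
  set c := x 2 with hc
  set d := x 3 with hd
  clear_value a b c d
  interval_cases a <;> interval_cases b <;> interval_cases c <;> interval_cases d <;>
    first
      | exact nineteen_aux (y 0) (y 1) (y 2) (y 3) (by linarith) (by clear hy n0 n1 n2 n3; omega)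
      | exact nineteen_aux (y 1) (y 0) (y 2) (y 3) (by linarith) (by clear hy n0 n1 n2 n3; omega)
      | exact nineteen_aux (y 2) (y 0) (y 1) (y 3) (by linarith) (by clear hy n0 n1 n2 n3; omega)
      | exact nineteen_aux (y 3) (y 0) (y 1) (y 2) (by linarith) (by clear hy n0 n1 n2 n3; omega)
      | (exfalso; norm_num at hx)
end

section
/- Let L ⊆ ℤ^(n+1) be closed under addition, and let k be a positive integer. If for all positive integers a, b, c with 2b ≥ a + c and b ≤ k there exist x, y ∈ L with x ∘ x = a, x ∘ y = b, y ∘ y = c, then for all positive integers a, b, c with b² ≥ ac and b ≤ k there exist x, y ∈ L with x ∘ x = a, x ∘ y = b, y ∘ y = c. -/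
/-- Linear k-completeness implies k-completeness for sets closed under addition. -/
theorem linear_complete_implies_complete (n : ℕ) (L : Set (Fin (n + 1) → ℤ))
    (lor : (Fin (n + 1) → ℤ) → (Fin (n + 1) → ℤ) → ℤ)
    (hlor : ∀ u v, lor u v = u 0 * v 0 - ∑ i : Fin n, u i.succ * v i.succ)
    (hadd : ∀ x ∈ L, ∀ y ∈ L, x + y ∈ L) (k : ℤ) (hk : 0 < k)
    (hlin : ∀ a b c : ℤ, 0 < a → 0 < b → 0 < c → a + c ≤ 2 * b → b ≤ k →
      ∃ x ∈ L, ∃ y ∈ L, lor x x = a ∧ lor x y = b ∧ lor y y = c) :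
    ∀ a b c : ℤ, 0 < a → 0 < b → 0 < c → a * c ≤ b ^ 2 → b ≤ k →
      ∃ x ∈ L, ∃ y ∈ L, lor x x = a ∧ lor x y = b ∧ lor y y = c := by
  have lsym : ∀ u v, lor u v = lor v u := by
    intro u v
    simp only [hlor, mul_comm]
  have ladd : ∀ u v w, lor u (v + w) = lor u v + lor u w := by
    intro u v w
    simp only [hlor, Pi.add_apply, mul_add, Finset.sum_add_distrib]
    ring
  have key : ∀ m : ℕ, ∀ a b c : ℤ, 0 < a → 0 < b → 0 < c → a * c ≤ b ^ 2 → b ≤ k →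
      b.toNat ≤ m → ∃ x ∈ L, ∃ y ∈ L, lor x x = a ∧ lor x y = b ∧ lor y y = c := by
    intro m
    induction m with
    | zero => intro a b c _ hb _ _ _ hm; omega
    | succ m ih =>
      intro a b c ha hb hc hac hbk hm
      by_cases h : a + c ≤ 2 * b
      · exact hlin a b c ha hb hc h hbk
      · push_neg at h
        rcases le_total a c with hle | hle
        · -- a ≤ c, use (a, b - a, a + c - 2*b)
          have hab : a < b := by nlinarith
          obtain ⟨x, hx, y, hy, hxx, hxy, hyy⟩ :=
            ih a (b - a) (a + c - 2 * b) ha (by omega) (by omega) (by nlinarith)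
              (by omega) (by omega)
          refine ⟨x, hx, x + y, hadd x hx y hy, hxx, ?_, ?_⟩
          · rw [ladd, hxx, hxy]; ring
          · rw [ladd, lsym (x + y) x, lsym (x + y) y, ladd, ladd, hxx, hxy, lsym y x, hxy, hyy]
            ring
        · -- c ≤ a, use (c, b - c, a + c - 2*b)
          have hcb : c < b := by nlinarith
          obtain ⟨x, hx, y, hy, hxx, hxy, hyy⟩ :=
            ih c (b - c) (a + c - 2 * b) hc (by omega) (by omega) (by nlinarith)
              (by omega) (by omega)
          refine ⟨x + y, hadd x hx y hy, x, hx, ?_, ?_, hxx⟩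
          · rw [lsym, ladd, lsym (x + y) x, lsym (x + y) y, ladd, ladd, hxx, hxy, lsym y x,
              hxy, hyy]
            ring
          · rw [lsym, ladd, hxx, hxy]; ring
  intro a b c ha hb hc hac hbk
  exact key b.toNat a b c ha hb hc hac hbk le_rfl
end

section
/- For all positive integers a, b, c with b² ≥ ac, there exist x, y ∈ ℕ⁷ such that x ∘ x = a, x ∘ y = b, and y ∘ y = c, where x ∘ y := x₀y₀ − x₁y₁ − ⋯ − x₆y₆. -/
private def Good (a b c : ℤ) : Prop :=
  ∃ x y : Fin 7 → ℤ, (∀ i, 0 ≤ x i) ∧ (∀ i, 0 ≤ y i) ∧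
      x 0 * x 0 - (∑ i : Fin 6, x i.succ * x i.succ) = a ∧
      x 0 * y 0 - (∑ i : Fin 6, x i.succ * y i.succ) = b ∧
      y 0 * y 0 - (∑ i : Fin 6, y i.succ * y i.succ) = c

private lemma vec_nonneg {A B C D E F G : ℤ} (h0 : 0 ≤ A) (h1 : 0 ≤ B) (h2 : 0 ≤ C)
    (h3 : 0 ≤ D) (h4 : 0 ≤ E) (h5 : 0 ≤ F) (h6 : 0 ≤ G) :
    ∀ i : Fin 7, 0 ≤ (![A,B,C,D,E,F,G] : Fin 7 → ℤ) i := by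
  intro i; fin_cases i <;> assumption

private lemma good_symm {a b c : ℤ} (h : Good a b c) : Good c b a := by
  obtain ⟨x, y, hx, hy, h1, h2, h3⟩ := h
  refine ⟨y, x, hy, hx, h3, ?_, h1⟩
  have e : ∑ i : Fin 6, y i.succ * x i.succ = ∑ i : Fin 6, x i.succ * y i.succ :=
    Finset.sum_congr rfl fun i _ => mul_comm _ _
  rw [e]; linarith [h2, mul_comm (y 0) (x 0), mul_comm (x 0) (y 0)]

private lemma good_base (a b c : ℤ) (ha : 0 < a) (hb : 0 < b) (hc : 0 < c)
    (h2 : a + c ≤ 2 * b) : Good a b c := by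
  obtain ⟨p, q, r, s, hN⟩ := Nat.sum_four_squares (2 * b - a - c).toNat
  have h0 : ((2 * b - a - c).toNat : ℤ) = 2 * b - a - c := Int.toNat_of_nonneg (by linarith)
  have hN' : (p : ℤ) * p + (q : ℤ) * q + (r : ℤ) * r + (s : ℤ) * s = 2 * b - a - c := by
    have := congrArg (Nat.cast : ℕ → ℤ) hN
    push_cast at this
    rw [h0] at this
    linear_combination this
  have hp : (0:ℤ) ≤ (p:ℤ) := Int.natCast_nonneg p
  have hq : (0:ℤ) ≤ (q:ℤ) := Int.natCast_nonneg q
  have hr : (0:ℤ) ≤ (r:ℤ) := Int.natCast_nonneg r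
  have hs : (0:ℤ) ≤ (s:ℤ) := Int.natCast_nonneg s
  rcases Int.even_or_odd' a with ⟨k, hk | hk⟩
  · -- a = 2k
    refine ⟨![k+1, k, 1, 0, 0, 0, 0], ![b-k+1, b-k, 1, (p:ℤ), (q:ℤ), (r:ℤ), (s:ℤ)],
      vec_nonneg (by omega) (by omega) (by omega) le_rfl le_rfl le_rfl le_rfl,
      vec_nonneg (by omega) (by omega) (by omega) hp hq hr hs, ?_, ?_, ?_⟩
    · simp only [Fin.sum_univ_six]
      show (k+1)*(k+1) - (k*k + 1*1 + 0*0 + 0*0 + 0*0 + 0*0) = a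
      linear_combination -hk
    · simp only [Fin.sum_univ_six]
      show (k+1)*(b-k+1) - (k*(b-k) + 1*1 + 0*(p:ℤ) + 0*(q:ℤ) + 0*(r:ℤ) + 0*(s:ℤ)) = b
      ring
    · simp only [Fin.sum_univ_six]
      show (b-k+1)*(b-k+1) - ((b-k)*(b-k) + 1*1 + (p:ℤ)*(p:ℤ) + (q:ℤ)*(q:ℤ) + (r:ℤ)*(r:ℤ) + (s:ℤ)*(s:ℤ)) = c
      linear_combination hk - hN'
  · -- a = 2k + 1
    refine ⟨![k+1, k, 0, 0, 0, 0, 0], ![b-k, b-k-1, (p:ℤ), (q:ℤ), (r:ℤ), (s:ℤ), 0],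
      vec_nonneg (by omega) (by omega) le_rfl le_rfl le_rfl le_rfl le_rfl,
      vec_nonneg (by omega) (by omega) hp hq hr hs le_rfl, ?_, ?_, ?_⟩
    · simp only [Fin.sum_univ_six]
      show (k+1)*(k+1) - (k*k + 0*0 + 0*0 + 0*0 + 0*0 + 0*0) = a
      linear_combination -hk
    · simp only [Fin.sum_univ_six]
      show (k+1)*(b-k) - (k*(b-k-1) + 0*(p:ℤ) + 0*(q:ℤ) + 0*(r:ℤ) + 0*(s:ℤ) + 0*0) = b
      ring
    · simp only [Fin.sum_univ_six]
      show (b-k)*(b-k) - ((b-k-1)*(b-k-1) + (p:ℤ)*(p:ℤ) + (q:ℤ)*(q:ℤ) + (r:ℤ)*(r:ℤ) + (s:ℤ)*(s:ℤ) + 0*0) = c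
      linear_combination hk - hN'

private lemma good_step {a b c : ℤ} (h : Good a (b - a) (a - 2*b + c)) : Good a b c := by
  obtain ⟨x, y, hx, hy, h1, h2, h3⟩ := h
  refine ⟨x, fun i => y i + x i, hx, fun i => add_nonneg (hy i) (hx i), h1, ?_, ?_⟩
  · have e : ∑ i : Fin 6, x i.succ * (y i.succ + x i.succ)
        = (∑ i : Fin 6, x i.succ * y i.succ) + ∑ i : Fin 6, x i.succ * x i.succ := by
      rw [← Finset.sum_add_distrib]
      exact Finset.sum_congr rfl fun i _ => by ring
    show x 0 * (y 0 + x 0) - (∑ i : Fin 6, x i.succ * (y i.succ + x i.succ)) = b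
    rw [e]; linear_combination h1 + h2
  · have e : ∑ i : Fin 6, (y i.succ + x i.succ) * (y i.succ + x i.succ)
        = (∑ i : Fin 6, y i.succ * y i.succ) + 2 * (∑ i : Fin 6, x i.succ * y i.succ)
          + ∑ i : Fin 6, x i.succ * x i.succ := by
      rw [Finset.mul_sum, ← Finset.sum_add_distrib, ← Finset.sum_add_distrib]
      exact Finset.sum_congr rfl fun i _ => by ring
    show (y 0 + x 0) * (y 0 + x 0) - (∑ i : Fin 6, (y i.succ + x i.succ) * (y i.succ + x i.succ)) = c
    rw [e]; linear_combination h1 + 2 * h2 + h3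

private lemma good_half (n : ℕ)
    (IH : ∀ a b c : ℤ, b ≤ n → 0 < a → 0 < b → 0 < c → a * c ≤ b ^ 2 → Good a b c)
    (a b c : ℤ) (hle : a ≤ c) (hbn : b ≤ (n : ℤ) + 1)
    (ha : 0 < a) (hb : 0 < b) (hc : 0 < c) (h : a * c ≤ b ^ 2) : Good a b c := by
  by_cases hbase : a + c ≤ 2 * b
  · exact good_base a b c ha hb hc hbase
  · push_neg at hbase
    have hab : a < b := by
      by_contra hba
      push_neg at hba
      have key : 0 ≤ (a - b) * (c - b) := mul_nonneg (by linarith) (by linarith)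
      nlinarith [mul_pos hb (show 0 < a + c - 2 * b by linarith)]
    apply good_step
    apply IH a (b - a) (a - 2*b + c) (by omega) ha (by omega) (by omega)
    nlinarith [h]

private lemma good_all : ∀ n : ℕ, ∀ a b c : ℤ, b ≤ n → 0 < a → 0 < b → 0 < c →
    a * c ≤ b ^ 2 → Good a b c := by
  intro n
  induction n with
  | zero => intro a b c hbn _ hb; omega
  | succ n IH =>
    intro a b c hbn ha hb hc h
    rcases le_total a c with hle | hle
    · exact good_half n IH a b c hle (by push_cast at hbn ⊢; omega) ha hb hc h
    · exact good_symm (good_half n IH c b a hle (by push_cast at hbn ⊢; omega) hc hb ha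
        (by linarith [mul_comm a c]))

/-- (ℕ⁷, ∘) is complete for the Lorentzian product. -/
theorem N7_complete (a b c : ℤ) (ha : 0 < a) (hb : 0 < b) (hc : 0 < c)
    (h : a * c ≤ b ^ 2) :
    ∃ x y : Fin 7 → ℤ, (∀ i, 0 ≤ x i) ∧ (∀ i, 0 ≤ y i) ∧
      x 0 * x 0 - (∑ i : Fin 6, x i.succ * x i.succ) = a ∧
      x 0 * y 0 - (∑ i : Fin 6, x i.succ * y i.succ) = b ∧
      y 0 * y 0 - (∑ i : Fin 6, y i.succ * y i.succ) = c :=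
  good_all b.toNat a b c (by omega) ha hb hc h
end

section
/- For all positive integers a, b, c with 2b ≥ a + c, there exist x, y ∈ ℕ⁷ such that x ∘ x = a, x ∘ y = b, and y ∘ y = c, where ∘ is the Lorentzian product x₀y₀ − x₁y₁ − ⋯ − x₆y₆. -/
private lemma vec7_val5 {α : Type*} (a b c d e f g : α) : ![a,b,c,d,e,f,g] 5 = f := rfl
private lemma vec7_val6 {α : Type*} (a b c d e f g : α) : ![a,b,c,d,e,f,g] 6 = g := rfl
private lemma vec6_val5 {α : Type*} (a b c d e f : α) : ![a,b,c,d,e,f] 5 = f := rfl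

/-- (ℕ⁷, ∘) is linearly complete for the Lorentzian product. -/
theorem N7_linearly_complete (a b c : ℤ) (ha : 0 < a) (hb : 0 < b) (hc : 0 < c)
    (h : a + c ≤ 2 * b) :
    ∃ x y : Fin 7 → ℤ, (∀ i, 0 ≤ x i) ∧ (∀ i, 0 ≤ y i) ∧
      x 0 * x 0 - (∑ i : Fin 6, x i.succ * x i.succ) = a ∧
      x 0 * y 0 - (∑ i : Fin 6, x i.succ * y i.succ) = b ∧
      y 0 * y 0 - (∑ i : Fin 6, y i.succ * y i.succ) = c := by
  have hr3 : 0 ≤ 2 * b - a - c := by linarith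
  obtain ⟨p, q, r, s, hpqrs⟩ := Nat.sum_four_squares (2 * b - a - c).toNat
  have hsq : (p : ℤ)^2 + (q : ℤ)^2 + (r : ℤ)^2 + (s : ℤ)^2 = 2 * b - a - c := by
    have := congrArg (fun n : ℕ => (n : ℤ)) hpqrs
    push_cast at this
    rw [this, Int.toNat_of_nonneg hr3]
  have hp0 : (0:ℤ) ≤ p := Int.natCast_nonneg p
  have hq0 : (0:ℤ) ≤ q := Int.natCast_nonneg q
  have hr0 : (0:ℤ) ≤ r := Int.natCast_nonneg r
  have hs0 : (0:ℤ) ≤ s := Int.natCast_nonneg s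
  rcases Int.even_or_odd c with ⟨k, hk⟩ | ⟨k, hk⟩
  · -- c = 2k
    subst hk
    have hk1 : 1 ≤ k := by omega
    have hbk : k ≤ b := by omega
    refine ⟨![b - k + 1, b - k, 1, p, q, r, s], ![k + 1, k, 1, 0, 0, 0, 0], ?_, ?_, ?_, ?_, ?_⟩
    · intro i
      fin_cases i
      · show (0:ℤ) ≤ b - k + 1; omega
      · show (0:ℤ) ≤ b - k; omega
      · show (0:ℤ) ≤ 1; omega
      · exact hp0
      · exact hq0
      · exact hr0
      · exact hs0
    · intro i
      fin_cases i
      · show (0:ℤ) ≤ k + 1; omega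
      · show (0:ℤ) ≤ k; omega
      · show (0:ℤ) ≤ 1; omega
      · exact le_refl 0
      · exact le_refl 0
      · exact le_refl 0
      · exact le_refl 0
    · simp [Fin.sum_univ_six, vec7_val5, vec7_val6, vec6_val5]
      linear_combination -hsq
    · simp [Fin.sum_univ_six, vec7_val5, vec7_val6, vec6_val5]
      ring
    · simp [Fin.sum_univ_six, vec7_val5, vec7_val6, vec6_val5]
      ring
  · -- c = 2k + 1
    subst hk
    have hk0 : 0 ≤ k := by omega
    have hbk : k + 1 ≤ b := by omega
    refine ⟨![b - k, b - k - 1, 0, p, q, r, s], ![k + 1, k, 0, 0, 0, 0, 0], ?_, ?_, ?_, ?_, ?_⟩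
    · intro i
      fin_cases i
      · show (0:ℤ) ≤ b - k; omega
      · show (0:ℤ) ≤ b - k - 1; omega
      · exact le_refl 0
      · exact hp0
      · exact hq0
      · exact hr0
      · exact hs0
    · intro i
      fin_cases i
      · show (0:ℤ) ≤ k + 1; omega
      · show (0:ℤ) ≤ k; omega
      all_goals exact le_refl 0
    · simp [Fin.sum_univ_six, vec7_val5, vec7_val6, vec6_val5]
      linear_combination -hsq
    · simp [Fin.sum_univ_six, vec7_val5, vec7_val6, vec6_val5]
      ring
    · simp [Fin.sum_univ_six, vec7_val5, vec7_val6, vec6_val5]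
      ring
end

section
/- For all positive integers a, b, c with b ≥ a and b ≥ c and b² ≥ ac, there exist vectors x, y in ℤ^(n+1) (for n sufficiently large, e.g. n = 2b) with all coordinates nonnegative, x₁ = x₀ − 1, y₁ = y₀ − 1, all other coordinates of x and y in {0, 1}, such that x ∘ x = a, x ∘ y = b, y ∘ y = c under the Lorentzian product. -/
private lemma sum_if_interval (n s : ℕ) (hs : s < n) :
    ∑ i ∈ Finset.range n, (if 1 ≤ i ∧ i ≤ s then (1:ℤ) else 0) = s := by
  classical
  rw [Finset.sum_boole]
  have : (Finset.range n).filter (fun i => 1 ≤ i ∧ i ≤ s) = Finset.Ico 1 (s+1) := by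
    ext i
    simp only [Finset.mem_filter, Finset.mem_range, Finset.mem_Ico]
    omega
  rw [this, Nat.card_Ico]; simp

private lemma sum_prod_dj (b : ℕ) (hb : 1 ≤ b) (d e sx sy : ℕ)
    (hsyx : sy ≤ sx) (hsxb : sx < 2*b) (gx gy : ℕ → ℤ)
    (hgx : ∀ i, gx i = if i = 0 then (d:ℤ) else if i = 1 then (d:ℤ)-1
        else if i ≤ sx+1 then 1 else 0)
    (hgy : ∀ i, gy i = if i = 0 then (e:ℤ) else if i = 1 then (e:ℤ)-1
        else if i ≤ sy+1 then 1 else 0) :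
    ∑ i : Fin (2*b), gx (i.val+1) * gy (i.val+1)
      = ((d:ℤ)-1)*((e:ℤ)-1) + sy := by
  classical
  rw [Fin.sum_univ_eq_sum_range (fun i => gx (i+1) * gy (i+1)) (2*b)]
  have step : ∀ i ∈ Finset.range (2*b),
      gx (i+1) * gy (i+1) =
        (if i = 0 then ((d:ℤ)-1)*((e:ℤ)-1) else 0)
          + (if 1 ≤ i ∧ i ≤ sy then (1:ℤ) else 0) := by
    intro i _hi
    rcases Nat.eq_zero_or_pos i with h0 | h1
    · subst h0; simp [hgx, hgy]
    · have e0 : i + 1 ≠ 0 := by omega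
      have e1 : i + 1 ≠ 1 := by omega
      rw [hgx, hgy, if_neg e0, if_neg e1, if_neg e0, if_neg e1,
        if_neg (by omega : ¬ i = 0)]
      by_cases hy : i ≤ sy
      · rw [if_pos (by omega : i + 1 ≤ sx + 1), if_pos (by omega : i + 1 ≤ sy + 1),
          if_pos ⟨h1, hy⟩]
        ring
      · rw [if_neg (by omega : ¬ i + 1 ≤ sy + 1), if_neg (by omega : ¬ (1 ≤ i ∧ i ≤ sy))]
        ring
  rw [Finset.sum_congr rfl step, Finset.sum_add_distrib,
    Finset.sum_ite_eq' (Finset.range (2*b)) 0 (fun _ => ((d:ℤ)-1)*((e:ℤ)-1)),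
    if_pos (by simp; omega : (0:ℕ) ∈ Finset.range (2*b)),
    sum_if_interval (2*b) sy (by omega)]

/-- Representation by vectors of De Jonquières type in ℤ^(2b+1). -/
theorem de_jonquieres_type_representation (a b c : ℕ)
    (ha : 0 < a) (hb : 0 < b) (hc : 0 < c) (hab : a ≤ b) (hcb : c ≤ b)
    (h : a * c ≤ b ^ 2) :
    ∃ x y : Fin (2 * b + 1) → ℤ,
      (∀ i, 0 ≤ x i) ∧ (∀ i, 0 ≤ y i) ∧
      x 1 = x 0 - 1 ∧ y 1 = y 0 - 1 ∧
      (∀ i : Fin (2 * b + 1), 2 ≤ (i : ℕ) → x i = 0 ∨ x i = 1) ∧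
      (∀ i : Fin (2 * b + 1), 2 ≤ (i : ℕ) → y i = 0 ∨ y i = 1) ∧
      x 0 * x 0 - (∑ i : Fin (2 * b), x i.succ * x i.succ) = (a : ℤ) ∧
      x 0 * y 0 - (∑ i : Fin (2 * b), x i.succ * y i.succ) = (b : ℤ) ∧
      y 0 * y 0 - (∑ i : Fin (2 * b), y i.succ * y i.succ) = (c : ℤ) := by
  classical
  set q : ℕ := (c+1)/2 with hq
  set d : ℕ := b + 1 - q with hd
  set e : ℕ := c/2 + 1 with he
  set sy : ℕ := 1 - c % 2 with hsy
  set sx : ℕ := 2*d - 1 - a with hsx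
  have hq1 : 1 ≤ q := by omega
  have hqb : q ≤ b := by omega
  have hd1 : 1 ≤ d := by omega
  have h2d : a + 1 ≤ 2*d := by omega
  have hsxv : (sx:ℤ) = 2*(d:ℤ) - 1 - a := by omega
  have hsxb : sx < 2*b := by omega
  have hsyx : sy ≤ sx := by omega
  have he1 : 1 ≤ e := by omega
  set gx : ℕ → ℤ := fun i => if i = 0 then (d:ℤ) else if i = 1 then (d:ℤ)-1
      else if i ≤ sx+1 then 1 else 0 with hgx
  set gy : ℕ → ℤ := fun i => if i = 0 then (e:ℤ) else if i = 1 then (e:ℤ)-1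
      else if i ≤ sy+1 then 1 else 0 with hgy
  have hv1 : ((1 : Fin (2*b+1)) : ℕ) = 1 := by
    rw [Fin.val_one']; exact Nat.mod_eq_of_lt (by omega)
  have hv0 : ((0 : Fin (2*b+1)) : ℕ) = 0 := rfl
  have sumxx := sum_prod_dj b hb d d sx sx le_rfl hsxb gx gx (fun i => rfl) (fun i => rfl)
  have sumxy := sum_prod_dj b hb d e sx sy hsyx hsxb gx gy (fun i => rfl) (fun i => rfl)
  have sumyy := sum_prod_dj b hb e e sy sy le_rfl (by omega) gy gy (fun i => rfl) (fun i => rfl)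
  refine ⟨fun i => gx i.val, fun i => gy i.val, ?_, ?_, ?_, ?_, ?_, ?_, ?_, ?_, ?_⟩
  · intro i; simp only [hgx]; split_ifs <;> omega
  · intro i; simp only [hgy]; split_ifs <;> omega
  · show gx _ = gx _ - 1
    rw [hv0, hv1]; simp [hgx]
  · show gy _ = gy _ - 1
    rw [hv0, hv1]; simp [hgy]
  · intro i hi
    show gx i.val = 0 ∨ gx i.val = 1
    simp only [hgx]; split_ifs <;> omega
  · intro i hi
    show gy i.val = 0 ∨ gy i.val = 1
    simp only [hgy]; split_ifs <;> omega
  · show gx _ * gx _ - (∑ i : Fin (2*b), gx (i.succ).val * gx (i.succ).val) = (a:ℤ)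
    simp only [Fin.val_succ, hv0]
    rw [sumxx, show gx 0 = (d:ℤ) by simp [hgx]]
    have : (d:ℤ) * d - (((d:ℤ)-1)*((d:ℤ)-1) + sx) = 2*(d:ℤ) - 1 - sx := by ring
    rw [this]; omega
  · show gx _ * gy _ - (∑ i : Fin (2*b), gx (i.succ).val * gy (i.succ).val) = (b:ℤ)
    simp only [Fin.val_succ, hv0]
    rw [sumxy, show gx 0 = (d:ℤ) by simp [hgx], show gy 0 = (e:ℤ) by simp [hgy]]
    have : (d:ℤ) * e - (((d:ℤ)-1)*((e:ℤ)-1) + sy) = (d:ℤ) + e - 1 - sy := by ring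
    rw [this]; omega
  · show gy _ * gy _ - (∑ i : Fin (2*b), gy (i.succ).val * gy (i.succ).val) = (c:ℤ)
    simp only [Fin.val_succ, hv0]
    rw [sumyy, show gy 0 = (e:ℤ) by simp [hgy]]
    have : (e:ℤ) * e - (((e:ℤ)-1)*((e:ℤ)-1) + sy) = 2*(e:ℤ) - 1 - sy := by ring
    rw [this]; omega
end
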